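/- arXiv:1505.02619 — 10 statements merged into one kernel-verified Lean document; each statement's English description precedes it below -/
import Mathlib

section
/- Let x be a vertex of receiver state (H_i, V_i) and y a vertex of a different receiver state (H_k, V_k) over N, and suppose x and y satisfy BC1 or BC2. Then there exists a packet combination P ⊆ N with |P| ≤ 2 that is instantly decodable for both x and y. (Simple P-VACs guarantee proper 2-cliques.) -/
/-- A receiver state over a finite set `N` of packets: a Has set `H ⊆ N` together with
a family `V` of nonempty, pairwise disjoint packet sets (the vertices) whose union is `N \ H`. -/
structure ReceiverState (N : Finset ℕ) where
  H : Finset ℕ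
  V : Finset (Finset ℕ)
  has_subset : H ⊆ N
  vertex_nonempty : ∀ x ∈ V, x.Nonempty
  vertex_disjoint : ∀ x ∈ V, ∀ y ∈ V, x ≠ y → Disjoint x y
  vertex_union : V.sup id = N \ H

/-- `P` is instantly decodable for vertex `x` of receiver state `R`. -/
def InstantlyDecodable {N : Finset ℕ} (R : ReceiverState N) (x P : Finset ℕ) : Prop :=
  P ⊆ x ∪ R.H ∧ (P ∩ x).Nonempty

/-- `P` is aggregating for vertex `x` of receiver state `R`. -/
def Aggregating {N : Finset ℕ} (R : ReceiverState N) (x P : Finset ℕ) : Prop :=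
  ∃ y ∈ R.V, y ≠ x ∧ P ⊆ x ∪ y ∪ R.H ∧ (P ∩ x).Nonempty ∧ (P ∩ y).Nonempty

/-- `P` benefits vertex `x` of receiver state `R`. -/
def Benefits {N : Finset ℕ} (R : ReceiverState N) (x P : Finset ℕ) : Prop :=
  InstantlyDecodable R x P ∨ Aggregating R x P

/-- Condition BC1 between vertices `x` and `y` of two different receiver states. -/
def BC1 (x y : Finset ℕ) : Prop := (x ∩ y).Nonempty

/-- Condition BC2 between vertex `x` of `Ri` and vertex `y` of `Rk`. -/
def BC2 {N : Finset ℕ} (Ri Rk : ReceiverState N) (x y : Finset ℕ) : Prop :=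
  x ∩ y = ∅ ∧ (x ∩ Rk.H).Nonempty ∧ (y ∩ Ri.H).Nonempty

/-- Simple P-VACs guarantee proper 2-cliques: if vertices `x` of `Ri` and `y` of `Rk`
(different receiver states) satisfy BC1 or BC2, then some packet combination `P ⊆ N`
with `|P| ≤ 2` is instantly decodable for both. -/
theorem stmt1 {N : Finset ℕ} (Ri Rk : ReceiverState N) (hR : Ri ≠ Rk)
    (x y : Finset ℕ) (hx : x ∈ Ri.V) (hy : y ∈ Rk.V)
    (h : BC1 x y ∨ BC2 Ri Rk x y) :
    ∃ P : Finset ℕ, P ⊆ N ∧ P.Nonempty ∧ P.card ≤ 2 ∧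
      InstantlyDecodable Ri x P ∧ InstantlyDecodable Rk y P := by
  have hxN : x ⊆ N := by
    intro a ha
    have := Ri.vertex_union ▸ (Finset.le_sup (f := id) hx ha)
    exact (Finset.mem_sdiff.mp this).1
  have hyN : y ⊆ N := by
    intro a ha
    have := Rk.vertex_union ▸ (Finset.le_sup (f := id) hy ha)
    exact (Finset.mem_sdiff.mp this).1
  rcases h with ⟨p, hp⟩ | ⟨_, ⟨p, hp⟩, ⟨q, hq⟩⟩
  · rw [Finset.mem_inter] at hp
    refine ⟨{p}, ?_, ⟨p, Finset.mem_singleton_self p⟩, by simp, ⟨?_, ⟨p, ?_⟩⟩, ⟨?_, ⟨p, ?_⟩⟩⟩ <;>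
      simp [hxN hp.1, hp.1, hp.2]
  · rw [Finset.mem_inter] at hp hq
    refine ⟨{p, q}, ?_, ⟨p, by simp⟩, Finset.card_le_two, ⟨?_, ⟨p, ?_⟩⟩,
      ⟨?_, ⟨q, ?_⟩⟩⟩
    · intro a ha
      rcases Finset.mem_insert.mp ha with rfl | ha
      · exact hxN hp.1
      · exact hyN (Finset.mem_singleton.mp ha ▸ hq.1)
    · intro a ha
      rcases Finset.mem_insert.mp ha with rfl | ha
      · exact Finset.mem_union_left _ hp.1
      · exact Finset.mem_union_right _ (Finset.mem_singleton.mp ha ▸ hq.2)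
    · simp [hp.1]
    · intro a ha
      rcases Finset.mem_insert.mp ha with rfl | ha
      · exact Finset.mem_union_right _ hp.2
      · exact Finset.mem_union_left _ (Finset.mem_singleton.mp ha ▸ hq.1)
    · simp [hq.1]
end

section
/- Let x_1, x_2, x_3 be vertices of three pairwise distinct receiver states (H_1, V_1), (H_2, V_2), (H_3, V_3) over N such that every pair of them satisfies BC1 or BC2. Then there exists a packet combination P ⊆ N that benefits all three vertices. (The Simple P-VACs guarantee the formation of proper 3-cliques; first statement of Theorem 1.) -/
lemma vertex_sub {N : Finset ℕ} (R : ReceiverState N) {x : Finset ℕ} (hx : x ∈ R.V) :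
    x ⊆ N := by
  have h : x ⊆ R.V.sup id := Finset.le_sup (f := id) hx
  rw [R.vertex_union] at h
  exact h.trans (Finset.sdiff_subset)

/-- Key lemma: if `P ⊆ N` meets `x` and every element of `P` except possibly `b`
lies in `x ∪ R.H`, then `P` benefits `x`. -/
lemma benefits_aux {N : Finset ℕ} (R : ReceiverState N) (x P : Finset ℕ)
    (hP : P ⊆ N) (hPx : (P ∩ x).Nonempty) (b : ℕ)
    (hb : ∀ p ∈ P, p ≠ b → p ∈ x ∪ R.H) : Benefits R x P := by
  by_cases hcase : ∀ p ∈ P, p ∈ x ∪ R.H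
  · exact Or.inl ⟨fun p hp => hcase p hp, hPx⟩
  · push_neg at hcase
    obtain ⟨q, hqP, hq⟩ := hcase
    have hqb : q = b := by
      by_contra h; exact hq (hb q hqP h)
    subst hqb
    have hqN : q ∈ N := hP hqP
    have hqH : q ∉ R.H := fun h => hq (Finset.mem_union_right _ h)
    have hsup : q ∈ R.V.sup id := by
      rw [R.vertex_union]; exact Finset.mem_sdiff.mpr ⟨hqN, hqH⟩
    obtain ⟨y, hyV, hqy⟩ := Finset.mem_sup.mp hsup
    refine Or.inr ⟨y, hyV, ?_, ?_, hPx, ⟨q, Finset.mem_inter.mpr ⟨hqP, hqy⟩⟩⟩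
    · rintro rfl; exact hq (Finset.mem_union_left _ hqy)
    · intro p hp
      by_cases hpq : p = q
      · subst hpq; exact Finset.mem_union_left _ (Finset.mem_union_right _ hqy)
      · rcases Finset.mem_union.mp (hb p hp hpq) with h | h
        · exact Finset.mem_union_left _ (Finset.mem_union_left _ h)
        · exact Finset.mem_union_right _ h

/-- First statement of Theorem 1: the Simple P-VACs guarantee proper 3-cliques. -/
theorem stmt2 {N : Finset ℕ} (R1 R2 R3 : ReceiverState N)
    (h12 : R1 ≠ R2) (h13 : R1 ≠ R3) (h23 : R2 ≠ R3)
    (x1 x2 x3 : Finset ℕ) (hx1 : x1 ∈ R1.V) (hx2 : x2 ∈ R2.V) (hx3 : x3 ∈ R3.V)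
    (hp12 : BC1 x1 x2 ∨ BC2 R1 R2 x1 x2)
    (hp13 : BC1 x1 x3 ∨ BC2 R1 R3 x1 x3)
    (hp23 : BC1 x2 x3 ∨ BC2 R2 R3 x2 x3) :
    ∃ P : Finset ℕ, P ⊆ N ∧ P.Nonempty ∧
      Benefits R1 x1 P ∧ Benefits R2 x2 P ∧ Benefits R3 x3 P := by
  have hN1 : x1 ⊆ N := vertex_sub R1 hx1
  have hN2 : x2 ⊆ N := vertex_sub R2 hx2
  have hN3 : x3 ⊆ N := vertex_sub R3 hx3
  -- helper to deal with the BC1 cases: a is in two vertices, c in the third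
  rcases hp12 with ⟨a, ha⟩ | hb12
  · -- a ∈ x1 ∩ x2, c ∈ x3
    obtain ⟨c, hc⟩ := R3.vertex_nonempty x3 hx3
    rw [Finset.mem_inter] at ha
    have hsub : ({a, c} : Finset ℕ) ⊆ N := by
      intro p hp
      rcases Finset.mem_insert.mp hp with rfl | hp
      · exact hN1 ha.1
      · rw [Finset.mem_singleton] at hp; subst hp; exact hN3 hc
    refine ⟨{a, c}, hsub, ⟨a, Finset.mem_insert_self _ _⟩, ?_, ?_, ?_⟩
    · refine benefits_aux R1 x1 _ hsub ⟨a, by simp [ha.1]⟩ c ?_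
      intro p hp hpc
      rcases Finset.mem_insert.mp hp with rfl | hp
      · exact Finset.mem_union_left _ ha.1
      · exact absurd (Finset.mem_singleton.mp hp) hpc
    · refine benefits_aux R2 x2 _ hsub ⟨a, by simp [ha.2]⟩ c ?_
      intro p hp hpc
      rcases Finset.mem_insert.mp hp with rfl | hp
      · exact Finset.mem_union_left _ ha.2
      · exact absurd (Finset.mem_singleton.mp hp) hpc
    · refine benefits_aux R3 x3 _ hsub ⟨c, by simp [hc]⟩ a ?_
      intro p hp hpa
      rcases Finset.mem_insert.mp hp with rfl | hp
      · exact absurd rfl hpa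
      · rw [Finset.mem_singleton] at hp; subst hp; exact Finset.mem_union_left _ hc
  rcases hp13 with ⟨a, ha⟩ | hb13
  · -- a ∈ x1 ∩ x3, c ∈ x2
    obtain ⟨c, hc⟩ := R2.vertex_nonempty x2 hx2
    rw [Finset.mem_inter] at ha
    have hsub : ({a, c} : Finset ℕ) ⊆ N := by
      intro p hp
      rcases Finset.mem_insert.mp hp with rfl | hp
      · exact hN1 ha.1
      · rw [Finset.mem_singleton] at hp; subst hp; exact hN2 hc
    refine ⟨{a, c}, hsub, ⟨a, Finset.mem_insert_self _ _⟩, ?_, ?_, ?_⟩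
    · refine benefits_aux R1 x1 _ hsub ⟨a, by simp [ha.1]⟩ c ?_
      intro p hp hpc
      rcases Finset.mem_insert.mp hp with rfl | hp
      · exact Finset.mem_union_left _ ha.1
      · exact absurd (Finset.mem_singleton.mp hp) hpc
    · refine benefits_aux R2 x2 _ hsub ⟨c, by simp [hc]⟩ a ?_
      intro p hp hpa
      rcases Finset.mem_insert.mp hp with rfl | hp
      · exact absurd rfl hpa
      · rw [Finset.mem_singleton] at hp; subst hp; exact Finset.mem_union_left _ hc
    · refine benefits_aux R3 x3 _ hsub ⟨a, by simp [ha.2]⟩ c ?_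
      intro p hp hpc
      rcases Finset.mem_insert.mp hp with rfl | hp
      · exact Finset.mem_union_left _ ha.2
      · exact absurd (Finset.mem_singleton.mp hp) hpc
  rcases hp23 with ⟨a, ha⟩ | hb23
  · -- a ∈ x2 ∩ x3, c ∈ x1
    obtain ⟨c, hc⟩ := R1.vertex_nonempty x1 hx1
    rw [Finset.mem_inter] at ha
    have hsub : ({a, c} : Finset ℕ) ⊆ N := by
      intro p hp
      rcases Finset.mem_insert.mp hp with rfl | hp
      · exact hN2 ha.1
      · rw [Finset.mem_singleton] at hp; subst hp; exact hN1 hc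
    refine ⟨{a, c}, hsub, ⟨a, Finset.mem_insert_self _ _⟩, ?_, ?_, ?_⟩
    · refine benefits_aux R1 x1 _ hsub ⟨c, by simp [hc]⟩ a ?_
      intro p hp hpa
      rcases Finset.mem_insert.mp hp with rfl | hp
      · exact absurd rfl hpa
      · rw [Finset.mem_singleton] at hp; subst hp; exact Finset.mem_union_left _ hc
    · refine benefits_aux R2 x2 _ hsub ⟨a, by simp [ha.1]⟩ c ?_
      intro p hp hpc
      rcases Finset.mem_insert.mp hp with rfl | hp
      · exact Finset.mem_union_left _ ha.1
      · exact absurd (Finset.mem_singleton.mp hp) hpc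
    · refine benefits_aux R3 x3 _ hsub ⟨a, by simp [ha.2]⟩ c ?_
      intro p hp hpc
      rcases Finset.mem_insert.mp hp with rfl | hp
      · exact Finset.mem_union_left _ ha.2
      · exact absurd (Finset.mem_singleton.mp hp) hpc
  -- all BC2
  obtain ⟨-, ⟨a, ha⟩, -⟩ := hb12   -- a ∈ x1 ∩ R2.H
  obtain ⟨-, -, ⟨c, hc⟩⟩ := hb13   -- c ∈ x3 ∩ R1.H
  obtain ⟨-, ⟨b, hbm⟩, -⟩ := hb23  -- b ∈ x2 ∩ R3.H
  rw [Finset.mem_inter] at ha hc hbm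
  have hsub : ({a, b, c} : Finset ℕ) ⊆ N := by
    intro p hp
    simp only [Finset.mem_insert, Finset.mem_singleton] at hp
    rcases hp with rfl | rfl | rfl
    · exact hN1 ha.1
    · exact hN2 hbm.1
    · exact hN3 hc.1
  refine ⟨{a, b, c}, hsub, ⟨a, by simp⟩, ?_, ?_, ?_⟩
  · -- exclude b: a ∈ x1, c ∈ R1.H
    refine benefits_aux R1 x1 _ hsub ⟨a, by simp [ha.1]⟩ b ?_
    intro p hp hpb
    simp only [Finset.mem_insert, Finset.mem_singleton] at hp
    rcases hp with rfl | rfl | rfl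
    · exact Finset.mem_union_left _ ha.1
    · exact absurd rfl hpb
    · exact Finset.mem_union_right _ hc.2
  · -- exclude c: b ∈ x2, a ∈ R2.H
    refine benefits_aux R2 x2 _ hsub ⟨b, by simp [hbm.1]⟩ c ?_
    intro p hp hpc
    simp only [Finset.mem_insert, Finset.mem_singleton] at hp
    rcases hp with rfl | rfl | rfl
    · exact Finset.mem_union_right _ ha.2
    · exact Finset.mem_union_left _ hbm.1
    · exact absurd rfl hpc
  · -- exclude a: c ∈ x3, b ∈ R3.H
    refine benefits_aux R3 x3 _ hsub ⟨c, by simp [hc.1]⟩ a ?_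
    intro p hp hpa
    simp only [Finset.mem_insert, Finset.mem_singleton] at hp
    rcases hp with rfl | rfl | rfl
    · exact absurd rfl hpa
    · exact Finset.mem_union_right _ hbm.2
    · exact Finset.mem_union_left _ hc.1
end

section
/- Let x be a vertex of receiver state (H_i, V_i), y a vertex of receiver state (H_k, V_k), and z a vertex of receiver state (H_m, V_m), where the three receiver states are pairwise distinct, and suppose x ∩ y ≠ ∅. Then for every p ∈ x ∩ y and every q ∈ z, the packet combination {p, q} benefits all three vertices x, y and z. -/
lemma vertex_mem_N {N : Finset ℕ} (R : ReceiverState N) {x : Finset ℕ} (hx : x ∈ R.V)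
    {a : ℕ} (ha : a ∈ x) : a ∈ N := by
  have : x ≤ R.V.sup id := Finset.le_sup (f := id) hx
  rw [R.vertex_union] at this
  exact (Finset.mem_sdiff.mp (this ha)).1

lemma benefit_aux {N : Finset ℕ} (R : ReceiverState N) {x : Finset ℕ} (hx : x ∈ R.V)
    {a b : ℕ} (ha : a ∈ x) (hb : b ∈ N) : Benefits R x {a, b} := by
  have hax : (({a, b} : Finset ℕ) ∩ x).Nonempty :=
    ⟨a, Finset.mem_inter.mpr ⟨by simp, ha⟩⟩
  by_cases hbH : b ∈ R.H
  · left
    refine ⟨?_, hax⟩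
    intro t ht
    rcases Finset.mem_insert.mp ht with rfl | ht
    · exact Finset.mem_union_left _ ha
    · rw [Finset.mem_singleton] at ht; subst ht
      exact Finset.mem_union_right _ hbH
  · have : b ∈ R.V.sup id := by
      rw [R.vertex_union]; exact Finset.mem_sdiff.mpr ⟨hb, hbH⟩
    obtain ⟨w, hw, hbw⟩ := Finset.mem_sup.mp this
    by_cases hwx : w = x
    · subst hwx
      left
      refine ⟨?_, hax⟩
      intro t ht
      rcases Finset.mem_insert.mp ht with rfl | ht
      · exact Finset.mem_union_left _ ha
      · rw [Finset.mem_singleton] at ht; subst ht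
        exact Finset.mem_union_left _ hbw
    · right
      refine ⟨w, hw, hwx, ?_, hax, ⟨b, Finset.mem_inter.mpr ⟨by simp, hbw⟩⟩⟩
      intro t ht
      rcases Finset.mem_insert.mp ht with rfl | ht
      · exact Finset.mem_union_left _ (Finset.mem_union_left _ ha)
      · rw [Finset.mem_singleton] at ht; subst ht
        exact Finset.mem_union_left _ (Finset.mem_union_right _ hbw)

/-- If `x ∩ y ≠ ∅`, then for any `p ∈ x ∩ y` and `q ∈ z`, the combination `{p, q}`
benefits all three vertices `x`, `y`, `z` of pairwise distinct receiver states. -/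
theorem stmt3 {N : Finset ℕ} (Ri Rk Rm : ReceiverState N)
    (hik : Ri ≠ Rk) (him : Ri ≠ Rm) (hkm : Rk ≠ Rm)
    (x y z : Finset ℕ) (hx : x ∈ Ri.V) (hy : y ∈ Rk.V) (hz : z ∈ Rm.V)
    (hxy : (x ∩ y).Nonempty) :
    ∀ p ∈ x ∩ y, ∀ q ∈ z,
      Benefits Ri x {p, q} ∧ Benefits Rk y {p, q} ∧ Benefits Rm z {p, q} := by
  intro p hp q hq
  have hpx : p ∈ x := (Finset.mem_inter.mp hp).1
  have hpy : p ∈ y := (Finset.mem_inter.mp hp).2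
  have hqN : q ∈ N := vertex_mem_N Rm hz hq
  have hpN : p ∈ N := vertex_mem_N Ri hx hpx
  refine ⟨benefit_aux Ri hx hpx hqN, benefit_aux Rk hy hpy hqN, ?_⟩
  rw [Finset.pair_comm]
  exact benefit_aux Rm hz hq hpN
end

section
/- Let x, y, z be vertices of three pairwise distinct receiver states (H_i, V_i), (H_k, V_k), (H_m, V_m) over N such that every pair of them satisfies BC2. Then for every p ∈ x ∩ H_k, every q ∈ y ∩ H_m and every r ∈ z ∩ H_i, the packet combination {p, q, r} benefits all three vertices x, y and z. -/
lemma benefits_aux_s4 {N : Finset ℕ} (R : ReceiverState N) (x : Finset ℕ) (hx : x ∈ R.V)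
    (a b c : ℕ) (ha : a ∈ x) (hb : b ∈ R.H) (hc : c ∈ N) :
    Benefits R x {a, b, c} := by
  by_cases hcx : c ∈ x ∪ R.H
  · left
    constructor
    · intro e he
      simp only [Finset.mem_insert, Finset.mem_singleton] at he
      rcases he with rfl | rfl | rfl
      · exact Finset.mem_union_left _ ha
      · exact Finset.mem_union_right _ hb
      · exact hcx
    · exact ⟨a, Finset.mem_inter.2 ⟨by simp, ha⟩⟩
  · have hc' : c ∈ N \ R.H := by
      simp only [Finset.mem_union, not_or] at hcx
      exact Finset.mem_sdiff.2 ⟨hc, hcx.2⟩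
    rw [← R.vertex_union] at hc'
    obtain ⟨w, hw, hcw⟩ := Finset.mem_sup.1 hc'
    simp only [id] at hcw
    have hwx : w ≠ x := by
      rintro rfl
      simp only [Finset.mem_union, not_or] at hcx
      exact hcx.1 hcw
    right
    refine ⟨w, hw, hwx, ?_, ⟨a, Finset.mem_inter.2 ⟨by simp, ha⟩⟩,
      ⟨c, Finset.mem_inter.2 ⟨by simp, hcw⟩⟩⟩
    intro e he
    simp only [Finset.mem_insert, Finset.mem_singleton] at he
    rcases he with rfl | rfl | rfl
    · exact Finset.mem_union_left _ (Finset.mem_union_left _ ha)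
    · exact Finset.mem_union_right _ hb
    · exact Finset.mem_union_left _ (Finset.mem_union_right _ hcw)

/-- If the three vertices pairwise satisfy BC2, then for any `p ∈ x ∩ H_k`,
`q ∈ y ∩ H_m`, `r ∈ z ∩ H_i`, the combination `{p, q, r}` benefits all three. -/
theorem stmt4 {N : Finset ℕ} (Ri Rk Rm : ReceiverState N)
    (hik : Ri ≠ Rk) (him : Ri ≠ Rm) (hkm : Rk ≠ Rm)
    (x y z : Finset ℕ) (hx : x ∈ Ri.V) (hy : y ∈ Rk.V) (hz : z ∈ Rm.V)
    (hxy : BC2 Ri Rk x y) (hxz : BC2 Ri Rm x z) (hyz : BC2 Rk Rm y z) :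
    ∀ p ∈ x ∩ Rk.H, ∀ q ∈ y ∩ Rm.H, ∀ r ∈ z ∩ Ri.H,
      Benefits Ri x {p, q, r} ∧ Benefits Rk y {p, q, r} ∧ Benefits Rm z {p, q, r} := by
  intro p hp q hq r hr
  obtain ⟨hpx, hpHk⟩ := Finset.mem_inter.1 hp
  obtain ⟨hqy, hqHm⟩ := Finset.mem_inter.1 hq
  obtain ⟨hrz, hrHi⟩ := Finset.mem_inter.1 hr
  have hxN : x ⊆ N := by
    intro e he
    have : x ⊆ Ri.V.sup id := Finset.le_sup (f := id) hx
    have := this he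
    rw [Ri.vertex_union] at this
    exact (Finset.mem_sdiff.1 this).1
  have hyN : y ⊆ N := by
    intro e he
    have : y ⊆ Rk.V.sup id := Finset.le_sup (f := id) hy
    have := this he
    rw [Rk.vertex_union] at this
    exact (Finset.mem_sdiff.1 this).1
  have hzN : z ⊆ N := by
    intro e he
    have : z ⊆ Rm.V.sup id := Finset.le_sup (f := id) hz
    have := this he
    rw [Rm.vertex_union] at this
    exact (Finset.mem_sdiff.1 this).1
  refine ⟨?_, ?_, ?_⟩
  · have h := benefits_aux_s4 Ri x hx p r q hpx hrHi (hyN hqy)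
    have hset : ({p, r, q} : Finset ℕ) = {p, q, r} := by ext e; simp; tauto
    rwa [hset] at h
  · have h := benefits_aux_s4 Rk y hy q p r hqy hpHk (hzN hrz)
    have hset : ({q, p, r} : Finset ℕ) = {p, q, r} := by ext e; simp; tauto
    rwa [hset] at h
  · have h := benefits_aux_s4 Rm z hz r q p hrz hqHm (hxN hpx)
    have hset : ({r, q, p} : Finset ℕ) = {p, q, r} := by ext e; simp; tauto
    rwa [hset] at h
end

section
/- There exist a finite set N of packets, five receiver states (H_1, V_1), …, (H_5, V_5) over N, and vertices x_j ∈ V_j for j = 1, …, 5 with x_j ∩ x_l ≠ ∅ for all j ≠ l (i.e., every pair satisfies BC1), such that no packet combination P ⊆ N benefits all five vertices simultaneously. Hence proper K-cliques cannot be guaranteed by BC1 for K ≥ 5. -/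
set_option maxRecDepth 20000
set_option maxHeartbeats 2000000

def myN : Finset ℕ := {1,2,3,4,12,13,14,23,24,34}

def myx : Fin 5 → Finset ℕ
  | 0 => {1,2,3,4}
  | 1 => {1,12,13,14}
  | 2 => {2,12,23,24}
  | 3 => {3,13,23,34}
  | 4 => {4,14,24,34}

def myV : Fin 5 → Finset (Finset ℕ)
  | 0 => {(({1,2,3,4} : Finset ℕ)), {12},{13},{14},{23},{24},{34}}
  | 1 => {(({1,12,13,14} : Finset ℕ)), {2},{3},{4},{23},{24},{34}}
  | 2 => {(({2,12,23,24} : Finset ℕ)), {1},{3},{4},{13},{14},{34}}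
  | 3 => {(({3,13,23,34} : Finset ℕ)), {1},{2},{4},{12},{14},{24}}
  | 4 => {(({4,14,24,34} : Finset ℕ)), {1},{2},{3},{12},{13},{23}}

def myR (j : Fin 5) : ReceiverState myN where
  H := ∅
  V := myV j
  has_subset := by simp
  vertex_nonempty := by fin_cases j <;> decide
  vertex_disjoint := by fin_cases j <;> decide
  vertex_union := by fin_cases j <;> decide


/-- Second statement of Theorem 1 (negative part): there exist five receiver states and
vertices pairwise satisfying BC1 such that no packet combination benefits all five. -/
theorem stmt6 : ∃ (N : Finset ℕ) (R : Fin 5 → ReceiverState N) (x : Fin 5 → Finset ℕ),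
    (∀ j l, j ≠ l → R j ≠ R l) ∧
    (∀ j, x j ∈ (R j).V) ∧
    (∀ j l, j ≠ l → (x j ∩ x l).Nonempty) ∧
    (∀ P : Finset ℕ, P ⊆ N → P.Nonempty → ¬ ∀ j, Benefits (R j) (x j) P) := by
  refine ⟨myN, myR, myx, ?_, ?_, ?_, ?_⟩
  · intro j l hjl h
    have hV : myV j = myV l := congrArg ReceiverState.V h
    fin_cases j <;> fin_cases l <;> first | exact absurd rfl hjl | exact absurd hV (by decide)
  · intro j; fin_cases j <;> decide
  · intro j l hjl; fin_cases j <;> fin_cases l <;> first | exact absurd rfl hjl | decide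
  · intro P hP hne hall
    have hsingle : ∀ j : Fin 5, ∀ y ∈ myV j, y ≠ myx j → y.card ≤ 1 := by
      intro j; fin_cases j <;> decide
    have hA : ∀ j : Fin 5, (P ∩ myx j).Nonempty ∧ (P \ myx j).card ≤ 1 := by
      intro j
      rcases hall j with ⟨hsub, hne'⟩ | ⟨y, hy, hyx, hsub, hx, hyP⟩
      · refine ⟨hne', ?_⟩
        have hsub' : P ⊆ myx j := by
          intro a ha; have := hsub ha
          simp only [myR, Finset.union_empty] at this; exact this
        have : P \ myx j = ∅ := Finset.sdiff_eq_empty_iff_subset.mpr hsub'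
        simp [this]
      · refine ⟨hx, ?_⟩
        have hsub2 : P \ myx j ⊆ y := by
          intro a ha
          rcases Finset.mem_sdiff.mp ha with ⟨haP, hax⟩
          have := hsub haP
          simp only [myR, Finset.union_empty, Finset.mem_union] at this
          tauto
        exact le_trans (Finset.card_le_card hsub2) (hsingle j y hy hyx)
    have hcnt : ∀ p ∈ myN, (∑ j : Fin 5, if p ∉ myx j then 1 else 0) = 3 := by decide
    have hsum : ∑ j : Fin 5, (P \ myx j).card = 3 * P.card := by
      calc ∑ j : Fin 5, (P \ myx j).card
          = ∑ j : Fin 5, ∑ p ∈ P, (if p ∉ myx j then 1 else 0) := by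
            refine Finset.sum_congr rfl fun j _ => ?_
            rw [Finset.sdiff_eq_filter, Finset.card_filter]
        _ = ∑ p ∈ P, ∑ j : Fin 5, (if p ∉ myx j then 1 else 0) := Finset.sum_comm
        _ = ∑ p ∈ P, 3 := Finset.sum_congr rfl fun p hp => hcnt p (hP hp)
        _ = 3 * P.card := by rw [Finset.sum_const, smul_eq_mul, mul_comm]
    have hbound : ∑ j : Fin 5, (P \ myx j).card ≤ 5 := by
      calc ∑ j : Fin 5, (P \ myx j).card ≤ ∑ _j : Fin 5, 1 :=
            Finset.sum_le_sum fun j _ => (hA j).2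
        _ = 5 := by simp
    rw [hsum] at hbound
    have hcard1 : P.card = 1 := by
      have h1 : P.card ≤ 1 := by omega
      have h2 : 1 ≤ P.card := Finset.one_le_card.mpr hne
      omega
    obtain ⟨p, hp⟩ := Finset.card_eq_one.mp hcard1
    have hpN : p ∈ myN := hP (by simp [hp])
    have hmiss : ∀ q ∈ myN, ∃ j : Fin 5, q ∉ myx j := by decide
    obtain ⟨j, hj⟩ := hmiss p hpN
    obtain ⟨a, ha⟩ := (hA j).1
    rcases Finset.mem_inter.mp ha with ⟨haP, hax⟩
    rw [hp, Finset.mem_singleton] at haP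
    exact hj (haP ▸ hax)
end

section
/- Let x_1, …, x_K be vertices of K pairwise distinct receiver states (H_1, V_1), …, (H_K, V_K) over N such that every pair of these vertices satisfies BC1*. Then there exists a packet combination P ⊆ N that is instantly decodable or aggregating for every vertex x_j, j = 1, …, K; that is, all cliques formed under BC1* are proper (Theorem 2). -/
/-- The condition of BC1* for `x` and `y` written so that `|x| ≤ |y|`, where `Hk` is the
Has set of the receiver of `y`. -/
def BC1starCond (Hk : Finset ℕ) (x y : Finset ℕ) : Prop :=
  (x.card = 1 → x ⊆ y) ∧
  (x.card = y.card → 2 ≤ x.card → x.card - 1 ≤ (x ∩ y).card) ∧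
  (x.card < y.card → 2 ≤ x.card → (x \ Hk).card - 1 ≤ ((x \ Hk) ∩ y).card)

/-- Condition BC1* between vertex `x` of `Ri` and vertex `y` of `Rk`. -/
def BC1star {N : Finset ℕ} (Ri Rk : ReceiverState N) (x y : Finset ℕ) : Prop :=
  (x ∩ y).Nonempty ∧
  (x.card ≤ y.card → BC1starCond Rk.H x y) ∧
  (y.card ≤ x.card → BC1starCond Ri.H y x)

/-- Condition BC2* between vertex `x` of `Ri` and vertex `y` of `Rk`. -/
def BC2star {N : Finset ℕ} (Ri Rk : ReceiverState N) (x y : Finset ℕ) : Prop :=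
  x ∩ y = ∅ ∧ x ⊆ Rk.H ∧ y ⊆ Ri.H

/-- Theorem 2: all cliques formed under BC1* are proper. -/
theorem stmt8 {N : Finset ℕ} {K : ℕ} (hK : 0 < K)
    (R : Fin K → ReceiverState N) (x : Fin K → Finset ℕ)
    (hdist : ∀ j l, j ≠ l → R j ≠ R l)
    (hx : ∀ j, x j ∈ (R j).V)
    (hBC : ∀ j l, j ≠ l → BC1star (R j) (R l) (x j) (x l)) :
    ∃ P : Finset ℕ, P ⊆ N ∧ P.Nonempty ∧
      ∀ j, InstantlyDecodable (R j) (x j) P ∨ Aggregating (R j) (x j) P := by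
  -- choose m with minimal |x m|
  obtain ⟨m, -, hm⟩ := Finset.exists_min_image Finset.univ (fun j => (x j).card)
    ⟨⟨0, hK⟩, Finset.mem_univ _⟩
  -- x m ⊆ N
  have hsubN : ∀ j, x j ⊆ N := by
    intro j p hp
    have h1 : x j ⊆ (R j).V.sup id := Finset.le_sup (f := id) (hx j)
    have h2 := (R j).vertex_union ▸ h1 hp
    exact (Finset.mem_sdiff.mp h2).1
  refine ⟨x m, hsubN m, (R m).vertex_nonempty _ (hx m), ?_⟩
  intro j
  by_cases hjm : j = m
  · subst hjm
    exact Or.inl ⟨Finset.subset_union_left, by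
      rw [Finset.inter_self]; exact (R j).vertex_nonempty _ (hx j)⟩
  · have hBCj := hBC m j (fun h => hjm h.symm)
    have hle : (x m).card ≤ (x j).card := hm j (Finset.mem_univ j)
    obtain ⟨hne, hcond, -⟩ := hBCj
    obtain ⟨h1, h2, h3⟩ := hcond hle
    set D := (x m \ (R j).H) \ x j with hD
    have hDcard : D.card ≤ 1 := by
      rcases Nat.lt_or_ge (x m).card 2 with hs | hs
      · rcases Nat.lt_or_ge (x m).card 1 with hs0 | hs1
        · have hxm : x m = ∅ := Finset.card_eq_zero.mp (Nat.lt_one_iff.mp hs0)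
          simp [hD, hxm]
        · have hxm1 : (x m).card = 1 := le_antisymm (Nat.lt_succ_iff.mp hs) hs1
          have hsub := h1 hxm1
          have : D ⊆ x m \ x j := Finset.sdiff_subset_sdiff Finset.sdiff_subset le_rfl
          have : D ⊆ ∅ := by
            refine this.trans ?_
            rw [Finset.sdiff_eq_empty_iff_subset.mpr hsub]
          simp [Finset.subset_empty.mp this]
      · rcases eq_or_lt_of_le hle with heq | hlt
        · have hcard := h2 heq hs
          have key := Finset.card_inter_add_card_sdiff (x m) (x j)
          have hDsub : D ⊆ x m \ x j :=
            Finset.sdiff_subset_sdiff Finset.sdiff_subset le_rfl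
          have := Finset.card_le_card hDsub
          omega
        · have hcard := h3 hlt hs
          have key := Finset.card_inter_add_card_sdiff (x m \ (R j).H) (x j)
          rw [hD]
          omega
    by_cases hDe : D = ∅
    · left
      constructor
      · intro p hp
        by_cases hpH : p ∈ (R j).H
        · exact Finset.mem_union_right _ hpH
        · by_cases hpx : p ∈ x j
          · exact Finset.mem_union_left _ hpx
          · exfalso
            have : p ∈ D := by
              rw [hD]
              simp [hp, hpH, hpx]
            simp [hDe] at this
      · exact hne
    · obtain ⟨q, hq⟩ := Finset.nonempty_iff_ne_empty.mpr hDe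
      have hq' := Finset.mem_sdiff.mp hq
      have hqH := Finset.mem_sdiff.mp hq'.1
      -- q ∈ N \ H j, so q belongs to some vertex y of R j
      have hqN : q ∈ N \ (R j).H := Finset.mem_sdiff.mpr ⟨hsubN m hqH.1, hqH.2⟩
      rw [← (R j).vertex_union] at hqN
      obtain ⟨y, hy, hqy⟩ := Finset.mem_sup.mp hqN
      right
      refine ⟨y, hy, ?_, ?_, hne, ⟨q, Finset.mem_inter.mpr ⟨hqH.1, hqy⟩⟩⟩
      · intro hyx
        exact hq'.2 (hyx ▸ hqy)
      · intro p hp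
        by_cases hpH : p ∈ (R j).H
        · exact Finset.mem_union_right _ hpH
        · by_cases hpx : p ∈ x j
          · exact Finset.mem_union_left _ (Finset.mem_union_left _ hpx)
          · have hpD : p ∈ D := by rw [hD]; simp [hp, hpH, hpx]
            have : p = q := Finset.card_le_one.mp hDcard p hpD q hq
            exact Finset.mem_union_left _ (Finset.mem_union_right _ (this ▸ hqy))
end

section
/- Let x ⊆ N be a finite set with |x| ≥ 2 and let p, p' be distinct elements of x. Let (H, V) be a receiver state over N and let y ∈ V be a vertex with |x ∩ y| ≥ |x| − 1. Then the packet combination {p, p'} benefits vertex y of receiver state (H, V). (Case 2 in the proof of Theorem 2.) -/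
/-- Case 2 in the proof of Theorem 2: if `|x| ≥ 2`, `p ≠ p'` are elements of `x`, and
`y` is a vertex with `|x ∩ y| ≥ |x| - 1`, then `{p, p'}` benefits `y`. -/
theorem stmt11 {N : Finset ℕ} (R : ReceiverState N)
    (x : Finset ℕ) (hxN : x ⊆ N) (hx2 : 2 ≤ x.card)
    (p p' : ℕ) (hp : p ∈ x) (hp' : p' ∈ x) (hne : p ≠ p')
    (y : Finset ℕ) (hy : y ∈ R.V) (hcard : x.card - 1 ≤ (x ∩ y).card) :
    Benefits R y {p, p'} := by
  have key : p ∈ y ∨ p' ∈ y := by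
    by_contra h
    push_neg at h
    have hsub : x ∩ y ⊆ x \ {p, p'} := by
      intro a ha
      simp only [Finset.mem_inter] at ha
      simp only [Finset.mem_sdiff, Finset.mem_insert, Finset.mem_singleton]
      refine ⟨ha.1, ?_⟩
      rintro (rfl | rfl)
      exacts [h.1 ha.2, h.2 ha.2]
    have h1 : (x \ {p, p'}).card = x.card - 2 := by
      rw [Finset.card_sdiff_of_subset]
      · simp [hne]
      · intro a ha
        simp only [Finset.mem_insert, Finset.mem_singleton] at ha
        rcases ha with rfl | rfl <;> assumption
    have := Finset.card_le_card hsub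
    omega
  have main : ∀ q q' : ℕ, q ∈ x → q' ∈ x → q ≠ q' → q ∈ y →
      Benefits R y {q, q'} := by
    intro q q' hq hq' hqq' hqy
    have hqN : q' ∈ N := hxN hq'
    by_cases hq'y : q' ∈ y
    · left
      constructor
      · intro a ha
        simp only [Finset.mem_insert, Finset.mem_singleton] at ha
        rcases ha with rfl | rfl <;> simp [hqy, hq'y]
      · exact ⟨q, by simp [hqy]⟩
    · by_cases hq'H : q' ∈ R.H
      · left
        constructor
        · intro a ha
          simp only [Finset.mem_insert, Finset.mem_singleton] at ha
          rcases ha with rfl | rfl <;> simp [hqy, hq'H]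
        · exact ⟨q, by simp [hqy]⟩
      · have hmem : q' ∈ R.V.sup id := by
          rw [R.vertex_union, Finset.mem_sdiff]
          exact ⟨hqN, hq'H⟩
        rw [Finset.mem_sup] at hmem
        obtain ⟨z, hz, hq'z⟩ := hmem
        simp only [id_eq] at hq'z
        right
        refine ⟨z, hz, ?_, ?_, ⟨q, by simp [hqy]⟩, ⟨q', by simp [hq'z]⟩⟩
        · rintro rfl; exact hq'y hq'z
        · intro a ha
          simp only [Finset.mem_insert, Finset.mem_singleton] at ha
          rcases ha with rfl | rfl <;> simp [hqy, hq'z]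
  rcases key with hpy | hp'y
  · exact main p p' hp hp' hne hpy
  · rw [Finset.pair_comm]
    exact main p' p hp' hp hne.symm hp'y
end

section
/- Let x_1, …, x_K be vertices of K pairwise distinct receiver states (H_1, V_1), …, (H_K, V_K) over N such that every pair of these vertices satisfies BC1* or BC2*, and let x_m be a vertex of minimum cardinality among x_1, …, x_K. Then the packet combination P = x_m benefits every vertex x_j with x_j ∩ x_m ≠ ∅ (including x_m itself), and P ⊆ H_j for every index j with x_j ∩ x_m = ∅. (Basis of the packet-combination determination procedure.) -/
/-- Basis of the packet-combination determination procedure: if the vertices pairwise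
satisfy BC1* or BC2* and `x m` has minimum cardinality, then the combination `x m`
benefits every vertex intersecting `x m` (including `x m` itself), and is entirely in
the Has set of every receiver whose vertex is disjoint from `x m`. -/
theorem stmt14 {N : Finset ℕ} {K : ℕ}
    (R : Fin K → ReceiverState N) (x : Fin K → Finset ℕ)
    (hdist : ∀ j l, j ≠ l → R j ≠ R l)
    (hx : ∀ j, x j ∈ (R j).V)
    (hBC : ∀ j l, j ≠ l →
      BC1star (R j) (R l) (x j) (x l) ∨ BC2star (R j) (R l) (x j) (x l))
    (m : Fin K) (hm : ∀ j, (x m).card ≤ (x j).card) :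
    (∀ j, (x j ∩ x m).Nonempty → Benefits (R j) (x j) (x m)) ∧
    (∀ j, x j ∩ x m = ∅ → x m ⊆ (R j).H) := by
  have mem_vertex : ∀ (Rk : ReceiverState N) (p : ℕ), p ∈ N → p ∉ Rk.H →
      ∃ y ∈ Rk.V, p ∈ y := by
    intro Rk p hpN hpH
    have h : p ∈ Rk.V.sup id := by rw [Rk.vertex_union]; simp [hpN, hpH]
    simpa using Finset.mem_sup.mp h
  have hxN : ∀ j, x j ⊆ N := by
    intro j p hp
    have h1 : x j ⊆ (R j).V.sup id := Finset.le_sup (f := id) (hx j)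
    have h2 := h1 hp
    rw [(R j).vertex_union] at h2
    exact (Finset.mem_sdiff.mp h2).1
  constructor
  · intro j hjm
    by_cases hjeq : j = m
    · subst hjeq
      left
      have hne : (x j ∩ x j).Nonempty := by
        rw [Finset.inter_self]; exact (R j).vertex_nonempty (x j) (hx j)
      exact ⟨Finset.subset_union_left, hne⟩
    · rcases hBC j m hjeq with hB1 | hB2
      · have hcond := hB1.2.2 (hm j)
        obtain ⟨h1, h2, h3⟩ := hcond
        have hint : (x m ∩ x j).Nonempty := by
          rwa [Finset.inter_comm] at hjm
        by_cases hcard1 : (x m).card = 1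
        · left
          exact ⟨fun p hp => Finset.mem_union_left _ (h1 hcard1 hp), hint⟩
        · have hne : (x m).Nonempty := (R m).vertex_nonempty (x m) (hx m)
          have h2c : 2 ≤ (x m).card := by
            have := Finset.card_pos.mpr hne
            omega
          set S := (x m \ (R j).H) \ x j with hS
          have hScard : S.card ≤ 1 := by
            rw [hS]
            rcases lt_or_eq_of_le (hm j) with hlt | heq
            · have hb := h3 hlt h2c
              have he := Finset.card_inter_add_card_sdiff (x m \ (R j).H) (x j)
              omega
            · have hb := h2 heq h2c
              have he := Finset.card_inter_add_card_sdiff (x m) (x j)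
              have hsub : (x m \ (R j).H) \ x j ⊆ x m \ x j := by
                intro p hp
                simp only [Finset.mem_sdiff] at hp ⊢
                exact ⟨hp.1.1, hp.2⟩
              have := Finset.card_le_card hsub
              omega
          rcases Finset.eq_empty_or_nonempty S with hSe | hSne
          · left
            refine ⟨fun p hp => ?_, hint⟩
            by_cases hpH : p ∈ (R j).H
            · exact Finset.mem_union_right _ hpH
            · by_cases hpx : p ∈ x j
              · exact Finset.mem_union_left _ hpx
              · exfalso
                have : p ∈ S := by
                  simp only [hS, Finset.mem_sdiff]
                  exact ⟨⟨hp, hpH⟩, hpx⟩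
                rw [hSe] at this
                simp at this
          · have hS1 : S.card = 1 := le_antisymm hScard (Finset.card_pos.mpr hSne)
            obtain ⟨p, hp⟩ := Finset.card_eq_one.mp hS1
            have hpS : p ∈ S := by rw [hp]; simp
            simp only [hS, Finset.mem_sdiff] at hpS
            obtain ⟨⟨hpxm, hpH⟩, hpxj⟩ := hpS
            obtain ⟨y, hyV, hpy⟩ := mem_vertex (R j) p (hxN m hpxm) hpH
            right
            refine ⟨y, hyV, fun h => hpxj (h ▸ hpy), ?_, hint, ⟨p, by simp [hpxm, hpy]⟩⟩
            intro q hq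
            by_cases hqH : q ∈ (R j).H
            · exact Finset.mem_union_right _ hqH
            · by_cases hqx : q ∈ x j
              · exact Finset.mem_union_left _ (Finset.mem_union_left _ hqx)
              · have hqS : q ∈ S := by
                  simp only [hS, Finset.mem_sdiff]
                  exact ⟨⟨hq, hqH⟩, hqx⟩
                rw [hp] at hqS
                simp at hqS
                subst hqS
                exact Finset.mem_union_left _ (Finset.mem_union_right _ hpy)
      · exact absurd hB2.1 hjm.ne_empty
  · intro j hdisj
    by_cases hjeq : j = m
    · subst hjeq
      simp [Finset.inter_self] at hdisj
      exact absurd hdisj ((R j).vertex_nonempty (x j) (hx j)).ne_empty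
    · rcases hBC j m hjeq with hB1 | hB2
      · exact absurd hB1.1 (by simp [hdisj])
      · exact hB2.2.2
end

section
/- Let v_{i_1, j_1}, …, v_{i_K, j_K} be IDNC vertices of pairwise distinct receivers such that every pair of them satisfies C1 or C2. Then the set S = {j_1, …, j_K} of their wanted packets is instantly decodable for every vertex: for each k, j_k ∈ S and S \ {j_k} ⊆ H_{i_k}. (Sufficiency of the IDNC pairwise vertex adjacency conditions for clique decodability.) -/
/-- Sufficiency of the IDNC pairwise vertex adjacency conditions for clique
decodability: if IDNC vertices `(i k, j k)` of pairwise distinct receivers pairwise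
satisfy C1 or C2, then the set `S` of their wanted packets is instantly decodable for
every one of them. -/
theorem stmt15 {N : Finset ℕ} {ι : Type*} {K : ℕ}
    (H : ι → Finset ℕ) (hH : ∀ r, H r ⊆ N)
    (i : Fin K → ι) (hi : Function.Injective i)
    (j : Fin K → ℕ) (hj : ∀ k, j k ∈ N \ H (i k))
    (hC : ∀ k l, k ≠ l → j k = j l ∨ (j k ∈ H (i l) ∧ j l ∈ H (i k))) :
    ∀ k, j k ∈ Finset.image j Finset.univ ∧
      Finset.image j Finset.univ \ {j k} ⊆ H (i k) := by
  intro k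
  constructor
  · exact Finset.mem_image_of_mem j (Finset.mem_univ k)
  · intro x hx
    simp only [Finset.mem_sdiff, Finset.mem_image, Finset.mem_singleton] at hx
    obtain ⟨⟨l, _, rfl⟩, hne⟩ := hx
    have hlk : l ≠ k := fun h => hne (by rw [h])
    rcases hC l k hlk with h | h
    · exact absurd h hne
    · exact h.1
end

section
/- Let v_{i_1, j_1}, …, v_{i_K, j_K} be IDNC vertices of pairwise distinct receivers, and suppose there exists a set S ⊆ N that is instantly decodable for every one of these vertices, i.e., for each k, j_k ∈ S and S \ {j_k} ⊆ H_{i_k}. Then every pair of these vertices satisfies C1 or C2. (Necessity of the IDNC pairwise vertex adjacency conditions for clique decodability.) -/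
/-- Necessity of the IDNC pairwise vertex adjacency conditions for clique
decodability: if some set `S ⊆ N` is instantly decodable for every one of the IDNC
vertices `(i k, j k)` of pairwise distinct receivers, then every pair of these vertices
satisfies C1 or C2. -/
theorem stmt16 {N : Finset ℕ} {ι : Type*} {K : ℕ}
    (H : ι → Finset ℕ) (hH : ∀ r, H r ⊆ N)
    (i : Fin K → ι) (hi : Function.Injective i)
    (j : Fin K → ℕ) (hj : ∀ k, j k ∈ N \ H (i k))
    (S : Finset ℕ) (hSN : S ⊆ N)
    (hS : ∀ k, j k ∈ S ∧ S \ {j k} ⊆ H (i k)) :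
    ∀ k l, k ≠ l → j k = j l ∨ (j k ∈ H (i l) ∧ j l ∈ H (i k)) := by
  intro k l hkl
  by_cases h : j k = j l
  · exact Or.inl h
  · refine Or.inr ⟨(hS l).2 ?_, (hS k).2 ?_⟩
    · exact Finset.mem_sdiff.mpr ⟨(hS k).1, by simpa using h⟩
    · exact Finset.mem_sdiff.mpr ⟨(hS l).1, by simpa using fun e => h e.symm⟩
end
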